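/- For every β with 0 ≤ β ≤ 1/2, the chain of inequalities β·C_P(X,W) ≤ δ_β(X,W) ≤ C_β(X,W) holds. -/

import Mathlib

open Filter Real

/-- Shannon entropy (base 2) of a finitely supported probability mass function. -/
noncomputable def ent {A : Type} [Fintype A] (q : A → ℝ) : ℝ :=
  - ∑ a, q a * Real.logb 2 (q a)

/-- Joint law of the first `n+1` samples of a Markov chain with initial distribution `μ`
and transition matrix `P`. -/
noncomputable def chainJoint {X : Type} (μ : X → ℝ) (P : X → X → ℝ) (n : ℕ)
    (x : Fin (n + 1) → X) : ℝ :=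
  μ (x 0) * ∏ i : Fin n, P (x i.castSucc) (x i.succ)

/-- Joint law of `(Y_1, …, Y_{n+1})`, where `Y` is the stationary process obtained by
observing the stationary Markov chain `X ~ (μ, P)` through the channel `W`. -/
noncomputable def obsJoint {X Y : Type} [Fintype X] (μ : X → ℝ) (P : X → X → ℝ)
    (W : X → Y → ℝ) (n : ℕ) (y : Fin (n + 1) → Y) : ℝ :=
  ∑ x : Fin (n + 1) → X, chainJoint μ P n x * ∏ i, W (x i) (y i)

/-- A finite stochastic matrix is irreducible and aperiodic iff it is primitive, i.e., some
power (and hence all larger powers) of it is entrywise positive. -/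
def IrreducibleAperiodic {X : Type} [Fintype X] [DecidableEq X] (P : Matrix X X ℝ) : Prop :=
  ∃ N : ℕ, ∀ n ≥ N, ∀ x x' : X, 0 < (P ^ n) x x'

section Defs

variable {X Y : Type} [Fintype X] [Fintype Y]

/-- Marginal distribution `ν` of each `Y_k`: `νᵀ = μᵀ W`. -/
noncomputable def nuDist (μ : X → ℝ) (W : X → Y → ℝ) : Y → ℝ := fun y => ∑ x, μ x * W x y

/-- Joint distribution of `(Y_1, Y_2)`. -/
noncomputable def jointYY (μ : X → ℝ) (P : X → X → ℝ) (W : X → Y → ℝ) : Y × Y → ℝ :=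
  fun p => ∑ x, ∑ x', μ x * W x p.1 * P x x' * W x' p.2

/-- Joint distribution of `(X_1, Y_2)`. -/
noncomputable def jointX1Y2 (μ : X → ℝ) (P : X → X → ℝ) (W : X → Y → ℝ) : X × Y → ℝ :=
  fun p => ∑ x', μ p.1 * P p.1 x' * W x' p.2

/-- Joint distribution of `(X_2, Y_1)`. -/
noncomputable def jointX2Y1 (μ : X → ℝ) (P : X → X → ℝ) (W : X → Y → ℝ) : X × Y → ℝ :=
  fun p => ∑ x, μ x * W x p.2 * P x p.1

/-- Joint distribution of `(X_1, X_2)`. -/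
noncomputable def jointXX (μ : X → ℝ) (P : X → X → ℝ) : X × X → ℝ :=
  fun p => μ p.1 * P p.1 p.2

/-- Joint distribution of `(X_1, Y_1)`. -/
noncomputable def jointX1Y1 (μ : X → ℝ) (W : X → Y → ℝ) : X × Y → ℝ :=
  fun p => μ p.1 * W p.1 p.2

/-- Joint distribution of `(X_2, Y_2)`. -/
noncomputable def jointX2Y2 (μ : X → ℝ) (P : X → X → ℝ) (W : X → Y → ℝ) : X × Y → ℝ :=
  fun p => ∑ x, μ x * P x p.1 * W p.1 p.2

/-- Joint distribution of `(X_1, X_2, Y_2)`. -/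
noncomputable def jointX1X2Y2 (μ : X → ℝ) (P : X → X → ℝ) (W : X → Y → ℝ) :
    X × X × Y → ℝ :=
  fun p => μ p.1 * P p.1 p.2.1 * W p.2.1 p.2.2

/-- Joint distribution of `(X_1, X_2, Y_1)`. -/
noncomputable def jointX1X2Y1 (μ : X → ℝ) (P : X → X → ℝ) (W : X → Y → ℝ) :
    X × X × Y → ℝ :=
  fun p => μ p.1 * W p.1 p.2.2 * P p.1 p.2.1

/-- Joint distribution of `(X_1, Y_1, Y_2)`. -/
noncomputable def jointX1Y1Y2 (μ : X → ℝ) (P : X → X → ℝ) (W : X → Y → ℝ) :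
    X × Y × Y → ℝ :=
  fun p => ∑ x', μ p.1 * W p.1 p.2.1 * P p.1 x' * W x' p.2.2

/-- Conditional entropy `H(Y_2 | Y_1) = H(Y_1, Y_2) − H(Y_1)`. -/
noncomputable def HY2gY1 (μ : X → ℝ) (P : X → X → ℝ) (W : X → Y → ℝ) : ℝ :=
  ent (jointYY μ P W) - ent (nuDist μ W)

/-- Conditional entropy `H(Y_2 | X_1) = H(X_1, Y_2) − H(X_1)`. -/
noncomputable def HY2gX1 (μ : X → ℝ) (P : X → X → ℝ) (W : X → Y → ℝ) : ℝ :=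
  ent (jointX1Y2 μ P W) - ent μ

/-- Conditional entropy `H(Y_1 | X_2) = H(X_2, Y_1) − H(X_2)`. -/
noncomputable def HY1gX2 (μ : X → ℝ) (P : X → X → ℝ) (W : X → Y → ℝ) : ℝ :=
  ent (jointX2Y1 μ P W) - ent μ

/-- Mutual information `I(X_1; X_2) = H(X_1) + H(X_2) − H(X_1, X_2)` (stationary case). -/
noncomputable def IX1X2 (μ : X → ℝ) (P : X → X → ℝ) : ℝ :=
  2 * ent μ - ent (jointXX μ P)

/-- Mutual information `I(Y_1; Y_2) = H(Y_1) + H(Y_2) − H(Y_1, Y_2)` (stationary case). -/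
noncomputable def IY1Y2 (μ : X → ℝ) (P : X → X → ℝ) (W : X → Y → ℝ) : ℝ :=
  2 * ent (nuDist μ W) - ent (jointYY μ P W)

/-- The lumpability cost `C_L(X, W) = H(Y_2|Y_1) − H(Y_2|X_1)`. -/
noncomputable def CL (μ : X → ℝ) (P : X → X → ℝ) (W : X → Y → ℝ) : ℝ :=
  HY2gY1 μ P W - HY2gX1 μ P W

/-- The predictability cost `C_P(X, W) = I(X_1;X_2) − I(Y_1;Y_2)`. -/
noncomputable def CP (μ : X → ℝ) (P : X → X → ℝ) (W : X → Y → ℝ) : ℝ :=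
  IX1X2 μ P - IY1Y2 μ P W

/-- The aggregation cost `C_β(X, W) = (1−2β)·C_L(X,W) + β·C_P(X,W)`. -/
noncomputable def Cbeta (μ : X → ℝ) (P : X → X → ℝ) (W : X → Y → ℝ) (β : ℝ) : ℝ :=
  (1 - 2 * β) * CL μ P W + β * CP μ P W

/-- `δ_β(X,W) = (1−β)·(H(Y_2|Y_1) − H̄(Y)) + β·(I(X_1;X_2) − H(Y_1) + H̄(Y))`, where `hbarY`
denotes the entropy rate `H̄(Y)`. -/
noncomputable def deltaBeta (μ : X → ℝ) (P : X → X → ℝ) (W : X → Y → ℝ)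
    (hbarY β : ℝ) : ℝ :=
  (1 - β) * (HY2gY1 μ P W - hbarY) + β * (IX1X2 μ P - ent (nuDist μ W) + hbarY)

/-- Conditional mutual information
`I(X_1; X_2 | Y_2) = H(X_1,Y_2) + H(X_2,Y_2) − H(X_1,X_2,Y_2) − H(Y_2)`. -/
noncomputable def IX1X2gY2 (μ : X → ℝ) (P : X → X → ℝ) (W : X → Y → ℝ) : ℝ :=
  ent (jointX1Y2 μ P W) + ent (jointX2Y2 μ P W) - ent (jointX1X2Y2 μ P W) -
    ent (nuDist μ W)

/-- Conditional mutual information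
`I(X_2; X_1 | Y_1) = H(X_1,Y_1) + H(X_2,Y_1) − H(X_1,X_2,Y_1) − H(Y_1)`. -/
noncomputable def IX2X1gY1 (μ : X → ℝ) (P : X → X → ℝ) (W : X → Y → ℝ) : ℝ :=
  ent (jointX1Y1 μ W) + ent (jointX2Y1 μ P W) - ent (jointX1X2Y1 μ P W) -
    ent (nuDist μ W)

/-- Conditional mutual information
`I(Y_2; X_1 | Y_1) = H(X_1,Y_1) + H(Y_1,Y_2) − H(X_1,Y_1,Y_2) − H(Y_1)`. -/
noncomputable def IY2X1gY1 (μ : X → ℝ) (P : X → X → ℝ) (W : X → Y → ℝ) : ℝ :=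
  ent (jointX1Y1 μ W) + ent (jointYY μ P W) - ent (jointX1Y1Y2 μ P W) -
    ent (nuDist μ W)

/-- Mutual information `I(X_2; Y_1) = H(X_2) + H(Y_1) − H(X_2, Y_1)`. -/
noncomputable def IX2Y1 (μ : X → ℝ) (P : X → X → ℝ) (W : X → Y → ℝ) : ℝ :=
  ent μ + ent (nuDist μ W) - ent (jointX2Y1 μ P W)

/-- The deterministic channel induced by an aggregation function `g : X → Y`:
`W_{x→y} = 1` iff `y = g x`. -/
noncomputable def detW [DecidableEq Y] (g : X → Y) : X → Y → ℝ :=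
  fun x y => if g x = y then 1 else 0

/-- The row-stochastic matrix `R = P·W` for a deterministic aggregation `g`:
`R_{x→y} = ∑_{x' : g x' = y} P_{x→x'}`. -/
noncomputable def Rmat [DecidableEq Y] (P : X → X → ℝ) (g : X → Y) : X → Y → ℝ :=
  fun x y => ∑ x', if g x' = y then P x x' else 0

/-- Kullback–Leibler divergence (base 2) between two probability mass functions on `Y`. -/
noncomputable def klDiv2 (p q : Y → ℝ) : ℝ :=
  ∑ y, p y * Real.logb 2 (p y / q y)

end Defs


section Helpers

/-- Gibbs' inequality. -/
lemma gibbs {A : Type} [Fintype A] (p q : A → ℝ)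
    (hp0 : ∀ a, 0 ≤ p a) (hq0 : ∀ a, 0 ≤ q a)
    (hp1 : ∑ a, p a = 1) (hq1 : ∑ a, q a ≤ 1)
    (habs : ∀ a, p a ≠ 0 → q a ≠ 0) :
    ent p ≤ - ∑ a, p a * Real.logb 2 (q a) := by
  have hlog2 : (0:ℝ) < Real.log 2 := Real.log_pos one_lt_two
  have key : ∀ a, p a * Real.logb 2 (q a) - p a * Real.logb 2 (p a)
      ≤ (q a - p a) / Real.log 2 := by
    intro a
    rcases eq_or_lt_of_le (hp0 a) with h | h
    · simp only [← h, zero_mul, sub_zero, sub_self]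
      exact div_nonneg (hq0 a) (Real.log_nonneg one_le_two)
    · have hq : 0 < q a := lt_of_le_of_ne (hq0 a) (Ne.symm (habs a (ne_of_gt h)))
      have hdiv : 0 < q a / p a := div_pos hq h
      have := Real.log_le_sub_one_of_pos hdiv
      rw [Real.log_div (ne_of_gt hq) (ne_of_gt h)] at this
      have h2 : p a * (Real.log (q a) - Real.log (p a)) ≤ q a - p a := by
        have := mul_le_mul_of_nonneg_left this (le_of_lt h)
        calc p a * (Real.log (q a) - Real.log (p a)) ≤ p a * (q a / p a - 1) := this
          _ = q a - p a := by field_simp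
      rw [Real.logb, Real.logb]
      calc p a * (Real.log (q a) / Real.log 2) - p a * (Real.log (p a) / Real.log 2)
          = (p a * (Real.log (q a) - Real.log (p a))) / Real.log 2 := by ring
        _ ≤ (q a - p a) / Real.log 2 := by
            exact div_le_div_of_nonneg_right h2 hlog2.le |>.trans_eq rfl
  have hsum : ∑ a, (p a * Real.logb 2 (q a) - p a * Real.logb 2 (p a))
      ≤ ∑ a, (q a - p a) / Real.log 2 := Finset.sum_le_sum fun a _ => key a
  rw [Finset.sum_sub_distrib] at hsum
  have : ∑ a, (q a - p a) / Real.log 2 = ((∑ a, q a) - 1) / Real.log 2 := by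
    rw [← Finset.sum_div, Finset.sum_sub_distrib, hp1]
  rw [this] at hsum
  have h0 : ((∑ a, q a) - 1) / Real.log 2 ≤ 0 := by
    apply div_nonpos_of_nonpos_of_nonneg (by linarith) (le_of_lt hlog2)
  unfold ent
  linarith

lemma fiber_sum {D B : Type} [Fintype D] [Fintype B] [DecidableEq B]
    (h : D → B) (f : D → ℝ) (F : B → ℝ) :
    ∑ d, f d * F (h d) = ∑ b, (∑ d, if h d = b then f d else 0) * F b := by
  have key : ∀ b, (∑ d, if h d = b then f d else 0) * F b
      = ∑ d, if h d = b then f d * F (h d) else 0 := by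
    intro b
    rw [Finset.sum_mul]
    refine Finset.sum_congr rfl fun d _ => ?_
    by_cases hd : h d = b
    · simp [hd]
    · simp [hd]
  simp_rw [key]
  rw [Finset.sum_comm]
  refine Finset.sum_congr rfl fun d _ => ?_
  simp

/-- Submodularity: `H(D,C) + H(prD) ≤ H(D) + H(prD, C)`, i.e. `H(C|D) ≤ H(C|prD)`. -/
lemma sub_entropy {D B C : Type} [Fintype D] [Fintype B] [Fintype C] [DecidableEq B]
    (pr : D → B) (p : D × C → ℝ) (h0 : ∀ z, 0 ≤ p z) (h1 : ∑ z, p z = 1) :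
    ent p + ent (fun b => ∑ d, ∑ c, if pr d = b then p (d, c) else 0)
      ≤ ent (fun d => ∑ c, p (d, c))
        + ent (fun bc : B × C => ∑ d, if pr d = bc.1 then p (d, bc.2) else 0) := by
  set pD : D → ℝ := fun d => ∑ c, p (d, c) with hpD
  set pBC : B → C → ℝ := fun b c => ∑ d, if pr d = b then p (d, c) else 0 with hpBC
  set pB : B → ℝ := fun b => ∑ c, pBC b c with hpB
  have hBalt : ∀ b, (∑ d, ∑ c, if pr d = b then p (d, c) else 0) = pB b := by
    intro b; rw [hpB]; exact Finset.sum_comm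
  have hpD0 : ∀ d, 0 ≤ pD d := fun d => Finset.sum_nonneg fun c _ => h0 _
  have hpBC0 : ∀ b c, 0 ≤ pBC b c := fun b c =>
    Finset.sum_nonneg fun d _ => by by_cases hd : pr d = b <;> simp [hd, h0]
  have hpB0 : ∀ b, 0 ≤ pB b := fun b => Finset.sum_nonneg fun c _ => hpBC0 _ _
  set q : D × C → ℝ := fun z =>
    if pB (pr z.1) = 0 then 0 else pD z.1 * pBC (pr z.1) z.2 / pB (pr z.1) with hq
  have hq0 : ∀ z, 0 ≤ q z := by
    intro z
    show (0:ℝ) ≤ if pB (pr z.1) = 0 then 0 else pD z.1 * pBC (pr z.1) z.2 / pB (pr z.1)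
    split
    · exact le_rfl
    · exact div_nonneg (mul_nonneg (hpD0 _) (hpBC0 _ _)) (hpB0 _)
  have hq1 : ∑ z, q z ≤ 1 := by
    rw [Fintype.sum_prod_type]
    have hle : ∀ d, ∑ c, q (d, c) ≤ pD d := by
      intro d
      by_cases hb : pB (pr d) = 0
      · simp only [hq, hb, if_true, reduceIte]
        simpa using hpD0 d
      · have heq : ∑ c, q (d, c) = pD d := by
          simp only [hq, hb, if_false]
          rw [← Finset.sum_div, ← Finset.mul_sum,
            show (∑ i : C, pBC (pr d) i) = pB (pr d) from rfl]
          field_simp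
        rw [heq]
    calc ∑ d, ∑ c, q (d, c) ≤ ∑ d, pD d := Finset.sum_le_sum fun d _ => hle d
      _ = ∑ z : D × C, p z := by rw [Fintype.sum_prod_type]
      _ = 1 := h1
  have hsingle : ∀ z : D × C, p z ≠ 0 →
      (0 < pD z.1 ∧ 0 < pBC (pr z.1) z.2 ∧ 0 < pB (pr z.1)) := by
    intro z hz
    have hp : 0 < p z := lt_of_le_of_ne (h0 z) (Ne.symm hz)
    have h1' : p z ≤ pD z.1 := by
      have := Finset.single_le_sum (f := fun c => p (z.1, c))
        (fun c _ => h0 _) (Finset.mem_univ z.2)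
      simpa using this
    have h2' : p z ≤ pBC (pr z.1) z.2 := by
      have := Finset.single_le_sum (f := fun d => if pr d = pr z.1 then p (d, z.2) else 0)
        (fun d _ => by by_cases hd : pr d = pr z.1 <;> simp [hd, h0]) (Finset.mem_univ z.1)
      simpa using this
    have h3' : pBC (pr z.1) z.2 ≤ pB (pr z.1) :=
      Finset.single_le_sum (f := fun c => pBC (pr z.1) c)
        (fun c _ => hpBC0 _ _) (Finset.mem_univ z.2)
    exact ⟨lt_of_lt_of_le hp h1', lt_of_lt_of_le hp h2',
      lt_of_lt_of_le (lt_of_lt_of_le hp h2') h3'⟩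
  have habs : ∀ z, p z ≠ 0 → q z ≠ 0 := by
    intro z hz
    obtain ⟨hD, hBCp, hBp⟩ := hsingle z hz
    have : q z = pD z.1 * pBC (pr z.1) z.2 / pB (pr z.1) := if_neg (ne_of_gt hBp)
    rw [this]
    positivity
  have hmain := gibbs p q h0 hq0 h1 hq1 habs
  have hterm : ∀ z : D × C, p z * Real.logb 2 (q z)
      = p z * Real.logb 2 (pD z.1) + p z * Real.logb 2 (pBC (pr z.1) z.2)
        - p z * Real.logb 2 (pB (pr z.1)) := by
    intro z
    by_cases hz : p z = 0
    · simp [hz]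
    obtain ⟨hD, hBCp, hBp⟩ := hsingle z hz
    have : q z = pD z.1 * pBC (pr z.1) z.2 / pB (pr z.1) := if_neg (ne_of_gt hBp)
    rw [this, Real.logb_div (by positivity) (ne_of_gt hBp),
      Real.logb_mul (ne_of_gt hD) (ne_of_gt hBCp)]
    ring
  have hS1 : ∑ z : D × C, p z * Real.logb 2 (pD z.1) = ∑ d, pD d * Real.logb 2 (pD d) := by
    rw [Fintype.sum_prod_type]
    refine Finset.sum_congr rfl fun d _ => ?_
    dsimp only
    rw [← Finset.sum_mul]
  have hS2 : ∑ z : D × C, p z * Real.logb 2 (pBC (pr z.1) z.2)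
      = ∑ bc : B × C, pBC bc.1 bc.2 * Real.logb 2 (pBC bc.1 bc.2) := by
    rw [Fintype.sum_prod_type]
    calc ∑ d, ∑ c, p (d, c) * Real.logb 2 (pBC (pr (d, c).1) (d, c).2)
        = ∑ c, ∑ d, p (d, c) * Real.logb 2 (pBC (pr d) c) := Finset.sum_comm
      _ = ∑ c, ∑ b, pBC b c * Real.logb 2 (pBC b c) := by
          refine Finset.sum_congr rfl fun c _ => ?_
          rw [fiber_sum pr (fun d => p (d, c)) (fun b => Real.logb 2 (pBC b c))]
      _ = ∑ b, ∑ c, pBC b c * Real.logb 2 (pBC b c) := Finset.sum_comm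
      _ = ∑ bc : B × C, pBC bc.1 bc.2 * Real.logb 2 (pBC bc.1 bc.2) := by
          rw [Fintype.sum_prod_type]
  have hS3 : ∑ z : D × C, p z * Real.logb 2 (pB (pr z.1))
      = ∑ b, pB b * Real.logb 2 (pB b) := by
    rw [Fintype.sum_prod_type]
    have hstep : ∀ d, ∑ c, p (d, c) * Real.logb 2 (pB (pr d))
        = pD d * Real.logb 2 (pB (pr d)) := by
      intro d; rw [← Finset.sum_mul]
    calc ∑ d, ∑ c, p (d, c) * Real.logb 2 (pB (pr (d, c).1))
        = ∑ d, pD d * Real.logb 2 (pB (pr d)) :=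
          Finset.sum_congr rfl fun d _ => hstep d
      _ = ∑ b, (∑ d, if pr d = b then pD d else 0) * Real.logb 2 (pB b) :=
          fiber_sum pr pD (fun b => Real.logb 2 (pB b))
      _ = ∑ b, pB b * Real.logb 2 (pB b) := by
          refine Finset.sum_congr rfl fun b _ => ?_
          congr 1
          calc ∑ d, (if pr d = b then pD d else 0)
              = ∑ d, ∑ c, (if pr d = b then p (d, c) else 0) := by
                refine Finset.sum_congr rfl fun d _ => ?_
                by_cases hd : pr d = b <;> simp [hd, hpD]
            _ = ∑ c, ∑ d, (if pr d = b then p (d, c) else 0) := Finset.sum_comm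
            _ = pB b := by rw [hpB]
  have hfinal : - ∑ z, p z * Real.logb 2 (q z)
      = ent pD + (- ∑ bc : B × C, pBC bc.1 bc.2 * Real.logb 2 (pBC bc.1 bc.2)) - ent pB := by
    simp_rw [hterm]
    rw [Finset.sum_sub_distrib, Finset.sum_add_distrib, hS1, hS2, hS3]
    unfold ent
    ring
  simp_rw [hBalt]
  have hentBC : ent (fun bc : B × C => ∑ d, if pr d = bc.1 then p (d, bc.2) else 0)
      = - ∑ bc : B × C, pBC bc.1 bc.2 * Real.logb 2 (pBC bc.1 bc.2) := rfl
  rw [hentBC]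
  linarith [hmain, hfinal.symm.le]

lemma mul_mul_logb_mul {x y : ℝ} (hx : 0 ≤ x) (hy : 0 ≤ y) :
    x * y * Real.logb 2 (x * y) = x * y * Real.logb 2 x + x * y * Real.logb 2 y := by
  rcases eq_or_lt_of_le hx with h | h
  · simp [← h]
  rcases eq_or_lt_of_le hy with h' | h'
  · simp [← h']
  rw [Real.logb_mul (ne_of_gt h) (ne_of_gt h')]
  ring

/-- Entropy of a "hidden-Markov-step" product distribution. -/
lemma ent_prod_step {D B C : Type} [Fintype D] [Fintype B] [Fintype C]
    (pr : D → B) (A : D → ℝ) (g : B → C → ℝ)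
    (hA0 : ∀ d, 0 ≤ A d) (hg0 : ∀ b c, 0 ≤ g b c) (hg1 : ∀ b, ∑ c, g b c = 1) :
    ent (fun z : D × C => A z.1 * g (pr z.1) z.2)
      = ent A - ∑ z : D × C, A z.1 * g (pr z.1) z.2 * Real.logb 2 (g (pr z.1) z.2) := by
  unfold ent
  have hterm : ∀ z : D × C, A z.1 * g (pr z.1) z.2 * Real.logb 2 (A z.1 * g (pr z.1) z.2)
      = A z.1 * g (pr z.1) z.2 * Real.logb 2 (A z.1)
        + A z.1 * g (pr z.1) z.2 * Real.logb 2 (g (pr z.1) z.2) :=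
    fun z => mul_mul_logb_mul (hA0 _) (hg0 _ _)
  simp_rw [hterm]
  rw [Finset.sum_add_distrib]
  have h1 : ∑ z : D × C, A z.1 * g (pr z.1) z.2 * Real.logb 2 (A z.1)
      = ∑ d, A d * Real.logb 2 (A d) := by
    rw [Fintype.sum_prod_type]
    refine Finset.sum_congr rfl fun d _ => ?_
    dsimp only
    calc ∑ c, A d * g (pr d) c * Real.logb 2 (A d)
        = (A d * Real.logb 2 (A d)) * ∑ c, g (pr d) c := by
          rw [Finset.mul_sum]; refine Finset.sum_congr rfl fun c _ => by ring
      _ = A d * Real.logb 2 (A d) := by rw [hg1]; ring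
  rw [h1]
  ring

/-- Conditional independence equality:
if `p(d,c) = A(d) * g(pr d, c)` then `H(C|D) = H(C|B)` for the pushed-forward joint. -/
lemma eq_cond_entropy {D B C : Type} [Fintype D] [Fintype B] [Fintype C] [DecidableEq B]
    (pr : D → B) (A : D → ℝ) (g : B → C → ℝ)
    (hA0 : ∀ d, 0 ≤ A d) (hg0 : ∀ b c, 0 ≤ g b c) (hg1 : ∀ b, ∑ c, g b c = 1) :
    ent (fun z : D × C => A z.1 * g (pr z.1) z.2) - ent A
      = ent (fun bc : B × C => (∑ d, if pr d = bc.1 then A d else 0) * g bc.1 bc.2)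
        - ent (fun b => ∑ d, if pr d = b then A d else 0) := by
  set AB : B → ℝ := fun b => ∑ d, if pr d = b then A d else 0 with hAB
  have hAB0 : ∀ b, 0 ≤ AB b := fun b =>
    Finset.sum_nonneg fun d _ => by by_cases hd : pr d = b <;> simp [hd, hA0]
  have hL := ent_prod_step pr A g hA0 hg0 hg1
  have hR := ent_prod_step (id : B → B) AB g hAB0 hg0 hg1
  have hcross : ∑ z : D × C, A z.1 * g (pr z.1) z.2 * Real.logb 2 (g (pr z.1) z.2)
      = ∑ z : B × C, AB z.1 * g (id z.1) z.2 * Real.logb 2 (g (id z.1) z.2) := by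
    rw [Fintype.sum_prod_type, Fintype.sum_prod_type]
    rw [Finset.sum_comm]
    rw [Finset.sum_comm (γ := B)]
    refine Finset.sum_congr rfl fun c _ => ?_
    calc ∑ d, A d * g (pr d) c * Real.logb 2 (g (pr d) c)
        = ∑ d, A d * (g (pr d) c * Real.logb 2 (g (pr d) c)) := by
          refine Finset.sum_congr rfl fun d _ => by ring
      _ = ∑ b, AB b * (g b c * Real.logb 2 (g b c)) :=
          fiber_sum pr A (fun b => g b c * Real.logb 2 (g b c))
      _ = ∑ b, AB b * g (id b) c * Real.logb 2 (g (id b) c) := by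
          refine Finset.sum_congr rfl fun b _ => by simp only [id]; ring
  have hRid : ent (fun bc : B × C => (∑ d, if pr d = bc.1 then A d else 0) * g bc.1 bc.2)
      = ent (fun z : B × C => AB z.1 * g (id z.1) z.2) := rfl
  rw [hRid, hL, hR, hcross]
  ring

/-- `Fin.snoc` as an equivalence. -/
def snocE (α : Type) (k : ℕ) : ((Fin k → α) × α) ≃ (Fin (k + 1) → α) where
  toFun z := Fin.snoc z.1 z.2
  invFun f := (Fin.init f, f (Fin.last k))
  left_inv z := by
    ext <;> simp [Fin.init_snoc, Fin.snoc_last]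
  right_inv f := by simp [Fin.snoc_init_self]

lemma sum_snoc {α : Type} [Fintype α] (k : ℕ) (F : (Fin (k + 1) → α) → ℝ) :
    ∑ v, F v = ∑ z : (Fin k → α) × α, F (Fin.snoc z.1 z.2) :=
  (Fintype.sum_equiv (snocE α k) _ _ fun z => rfl).symm

lemma chain_snoc {X : Type} (μ : X → ℝ) (P : X → X → ℝ) (n : ℕ)
    (xs : Fin (n + 1) → X) (x : X) :
    chainJoint μ P (n + 1) (Fin.snoc xs x) = chainJoint μ P n xs * P (xs (Fin.last n)) x := by
  unfold chainJoint
  rw [Fin.prod_univ_castSucc]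
  have h0 : (Fin.snoc xs x : Fin (n + 2) → X) 0 = xs 0 := by
    rw [show (0 : Fin (n + 2)) = Fin.castSucc 0 by simp, Fin.snoc_castSucc]
  rw [h0]
  have h1 : ∀ i : Fin n,
      P ((Fin.snoc xs x : Fin (n+2) → X) (Fin.castSucc i).castSucc)
        ((Fin.snoc xs x : Fin (n+2) → X) (Fin.castSucc i).succ)
      = P (xs i.castSucc) (xs i.succ) := by
    intro i
    rw [Fin.snoc_castSucc, Fin.succ_castSucc, Fin.snoc_castSucc]
  rw [Finset.prod_congr rfl fun i _ => h1 i]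
  have h2 : ((Fin.snoc xs x : Fin (n+2) → X) (Fin.castSucc (Fin.last n))) = xs (Fin.last n) :=
    Fin.snoc_castSucc ..
  have h3 : ((Fin.snoc xs x : Fin (n+2) → X) (Fin.last n).succ) = x := by
    rw [Fin.succ_last, Fin.snoc_last]
  rw [h2, h3]
  ring

lemma prod_W_snoc {X Y : Type} (W : X → Y → ℝ) (k : ℕ)
    (xs : Fin k → X) (x : X) (ys : Fin k → Y) (y : Y) :
    ∏ i : Fin (k + 1), W ((Fin.snoc xs x : Fin (k+1) → X) i) ((Fin.snoc ys y : Fin (k+1) → Y) i)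
      = (∏ i : Fin k, W (xs i) (ys i)) * W x y := by
  rw [Fin.prod_univ_castSucc]
  simp [Fin.snoc_castSucc, Fin.snoc_last]

lemma prod_W_snoc' {X Y : Type} (W : X → Y → ℝ) (k : ℕ)
    (xs : Fin (k + 1) → X) (ys : Fin k → Y) (y : Y) :
    ∏ i : Fin (k + 1), W (xs i) ((Fin.snoc ys y : Fin (k+1) → Y) i)
      = (∏ i : Fin k, W (xs i.castSucc) (ys i)) * W (xs (Fin.last k)) y := by
  rw [Fin.prod_univ_castSucc]
  simp [Fin.snoc_castSucc, Fin.snoc_last]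

lemma sum_prod_W {X Y : Type} [Fintype X] [Fintype Y] (W : X → Y → ℝ)
    (hW1 : ∀ x, ∑ y, W x y = 1) (k : ℕ) (xs : Fin k → X) :
    ∑ ys : Fin k → Y, ∏ i, W (xs i) (ys i) = 1 := by
  rw [← Fintype.piFinset_univ, ← Finset.prod_univ_sum]
  simp [hW1]

section Chain
variable {X Y : Type} [Fintype X] [Fintype Y] [DecidableEq X]
variable (μ : X → ℝ) (P : X → X → ℝ) (W : X → Y → ℝ)

lemma chain_last_marg (hinv : ∀ x', ∑ x, μ x * P x x' = μ x') :
    ∀ n (x : X), ∑ xs : Fin (n + 1) → X,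
      (if xs (Fin.last n) = x then chainJoint μ P n xs else 0) = μ x := by
  intro n
  induction n with
  | zero =>
    intro x
    have he := Fintype.sum_equiv (Equiv.funUnique (Fin 1) X).symm
      (fun x1 : X => if x1 = x then μ x1 else 0)
      (fun xs : Fin 1 → X => if xs (Fin.last 0) = x then chainJoint μ P 0 xs else 0)
      (fun x1 => by simp [chainJoint, Equiv.funUnique])
    rw [← he]
    simp [Finset.sum_ite_eq']
  | succ n ih =>
    intro x
    rw [sum_snoc]
    have hterm : ∀ z : (Fin (n + 1) → X) × X,
        (if (Fin.snoc z.1 z.2 : Fin (n+2) → X) (Fin.last (n+1)) = x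
          then chainJoint μ P (n+1) (Fin.snoc z.1 z.2) else 0)
        = if z.2 = x then chainJoint μ P n z.1 * P (z.1 (Fin.last n)) z.2 else 0 := by
      intro z
      rw [Fin.snoc_last, chain_snoc]
    rw [Finset.sum_congr rfl fun z _ => hterm z, Fintype.sum_prod_type]
    have hinner : ∀ xs : Fin (n + 1) → X,
        (∑ x2, if x2 = x then chainJoint μ P n xs * P (xs (Fin.last n)) x2 else 0)
        = chainJoint μ P n xs * P (xs (Fin.last n)) x := by
      intro xs
      rw [Finset.sum_ite_eq' Finset.univ x
        (fun x2 => chainJoint μ P n xs * P (xs (Fin.last n)) x2)]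
      simp
    rw [Finset.sum_congr rfl fun xs _ => hinner xs]
    rw [fiber_sum (fun xs : Fin (n+1) → X => xs (Fin.last n)) (chainJoint μ P n)
      (fun x0 => P x0 x)]
    rw [Finset.sum_congr rfl fun x0 _ => by rw [ih x0]]
    exact hinv x
end Chain

section Obs
variable {X Y : Type} [Fintype X] [Fintype Y] [DecidableEq X] [DecidableEq Y]
variable (μ : X → ℝ) (P : X → X → ℝ) (W : X → Y → ℝ)

lemma sum_chain (hμ1 : ∑ x, μ x = 1) (hinv : ∀ x', ∑ x, μ x * P x x' = μ x') (n : ℕ) :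
    ∑ xs : Fin (n + 1) → X, chainJoint μ P n xs = 1 := by
  have hsplit : ∀ xs : Fin (n + 1) → X,
      chainJoint μ P n xs = ∑ x, if xs (Fin.last n) = x then chainJoint μ P n xs else 0 := by
    intro xs
    rw [Finset.sum_ite_eq Finset.univ (xs (Fin.last n)) (fun _ => chainJoint μ P n xs)]
    simp
  rw [Finset.sum_congr rfl fun xs _ => hsplit xs, Finset.sum_comm]
  rw [Finset.sum_congr rfl fun x _ => chain_last_marg μ P hinv n x]
  exact hμ1

lemma sum_obs (hμ1 : ∑ x, μ x = 1) (hinv : ∀ x', ∑ x, μ x * P x x' = μ x')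
    (hW1 : ∀ x, ∑ y, W x y = 1) (n : ℕ) :
    ∑ ys : Fin (n + 1) → Y, obsJoint μ P W n ys = 1 := by
  unfold obsJoint
  rw [Finset.sum_comm]
  have hin : ∀ xs : Fin (n + 1) → X,
      ∑ ys : Fin (n + 1) → Y, chainJoint μ P n xs * ∏ i, W (xs i) (ys i)
        = chainJoint μ P n xs := by
    intro xs
    rw [← Finset.mul_sum, sum_prod_W W hW1, mul_one]
  rw [Finset.sum_congr rfl fun xs _ => hin xs]
  exact sum_chain μ P hμ1 hinv n

noncomputable def Ahelp (n : ℕ) (ys : Fin (n + 1) → Y) (x : X) : ℝ :=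
  ∑ xs : Fin (n + 1) → X,
    if xs (Fin.last n) = x then chainJoint μ P n xs * ∏ i, W (xs i) (ys i) else 0

noncomputable def gstep (x : X) (c : Y) : ℝ := ∑ x', P x x' * W x' c

lemma gstep_sum (hP1 : ∀ x, ∑ x', P x x' = 1) (hW1 : ∀ x, ∑ y, W x y = 1) (x : X) :
    ∑ c, gstep P W x c = 1 := by
  unfold gstep
  rw [Finset.sum_comm]
  have h : ∀ x', ∑ c, P x x' * W x' c = P x x' := by
    intro x'; rw [← Finset.mul_sum, hW1, mul_one]
  rw [Finset.sum_congr rfl fun x' _ => h x']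
  exact hP1 x

lemma W_fiber (hW1 : ∀ x, ∑ y, W x y = 1) (k : ℕ) (xs : Fin (k + 1) → X) (b : Y) :
    ∑ ys : Fin (k + 1) → Y, (if ys (Fin.last k) = b then ∏ i, W (xs i) (ys i) else 0)
      = W (xs (Fin.last k)) b := by
  rw [sum_snoc]
  have hterm : ∀ z : (Fin k → Y) × Y,
      (if (Fin.snoc z.1 z.2 : Fin (k+1) → Y) (Fin.last k) = b
        then ∏ i, W (xs i) ((Fin.snoc z.1 z.2 : Fin (k+1) → Y) i) else 0)
      = if z.2 = b then (∏ i : Fin k, W (xs i.castSucc) (z.1 i)) * W (xs (Fin.last k)) z.2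
        else 0 := by
    intro z
    rw [Fin.snoc_last, prod_W_snoc']
  rw [Finset.sum_congr rfl fun z _ => hterm z, Fintype.sum_prod_type]
  have hin : ∀ ys' : Fin k → Y,
      (∑ y, if y = b then (∏ i : Fin k, W (xs i.castSucc) (ys' i)) * W (xs (Fin.last k)) y
        else 0)
      = (∏ i : Fin k, W (xs i.castSucc) (ys' i)) * W (xs (Fin.last k)) b := by
    intro ys'
    rw [Finset.sum_ite_eq' Finset.univ b
      (fun y => (∏ i : Fin k, W (xs i.castSucc) (ys' i)) * W (xs (Fin.last k)) y)]
    simp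
  rw [Finset.sum_congr rfl fun ys' _ => hin ys', ← Finset.sum_mul,
    sum_prod_W W hW1 k (fun i => xs i.castSucc), one_mul]

lemma obs_snoc_eq (n : ℕ) (ys : Fin (n + 1) → Y) (c : Y) :
    obsJoint μ P W (n + 1) (Fin.snoc ys c)
      = ∑ x, Ahelp μ P W n ys x * gstep P W x c := by
  unfold obsJoint
  rw [sum_snoc]
  have hterm : ∀ z : (Fin (n + 1) → X) × X,
      chainJoint μ P (n + 1) (Fin.snoc z.1 z.2)
        * ∏ i, W ((Fin.snoc z.1 z.2 : Fin (n+2) → X) i) ((Fin.snoc ys c : Fin (n+2) → Y) i)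
      = (chainJoint μ P n z.1 * ∏ i, W (z.1 i) (ys i))
        * (P (z.1 (Fin.last n)) z.2 * W z.2 c) := by
    intro z
    rw [chain_snoc, prod_W_snoc]
    ring
  rw [Finset.sum_congr rfl fun z _ => hterm z, Fintype.sum_prod_type]
  have hin : ∀ xs : Fin (n + 1) → X,
      (∑ x2, (chainJoint μ P n xs * ∏ i, W (xs i) (ys i))
        * (P (xs (Fin.last n)) x2 * W x2 c))
      = (chainJoint μ P n xs * ∏ i, W (xs i) (ys i)) * gstep P W (xs (Fin.last n)) c := by
    intro xs
    rw [← Finset.mul_sum]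
    rfl
  rw [Finset.sum_congr rfl fun xs _ => hin xs,
    fiber_sum (fun xs : Fin (n+1) → X => xs (Fin.last n))
      (fun xs => chainJoint μ P n xs * ∏ i, W (xs i) (ys i))
      (fun x => gstep P W x c)]
  rfl

lemma Ahelp_sum_x (n : ℕ) (ys : Fin (n + 1) → Y) :
    ∑ x, Ahelp μ P W n ys x = obsJoint μ P W n ys := by
  unfold Ahelp obsJoint
  rw [Finset.sum_comm]
  refine Finset.sum_congr rfl fun xs _ => ?_
  rw [Finset.sum_ite_eq Finset.univ (xs (Fin.last n))
    (fun _ => chainJoint μ P n xs * ∏ i, W (xs i) (ys i))]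
  simp

lemma Ahelp_nonneg (hμ0 : ∀ x, 0 ≤ μ x) (hP0 : ∀ x x', 0 ≤ P x x')
    (hW0 : ∀ x y, 0 ≤ W x y) (n : ℕ) (ys : Fin (n + 1) → Y) (x : X) :
    0 ≤ Ahelp μ P W n ys x := by
  refine Finset.sum_nonneg fun xs _ => ?_
  have hc : 0 ≤ chainJoint μ P n xs :=
    mul_nonneg (hμ0 _) (Finset.prod_nonneg fun i _ => hP0 _ _)
  by_cases h : xs (Fin.last n) = x <;>
    simp [h, mul_nonneg hc (Finset.prod_nonneg fun i _ => hW0 _ _)]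

lemma Ahelp_sum_ys (hinv : ∀ x', ∑ x, μ x * P x x' = μ x')
    (hW1 : ∀ x, ∑ y, W x y = 1) (n : ℕ) (x : X) :
    ∑ ys : Fin (n + 1) → Y, Ahelp μ P W n ys x = μ x := by
  unfold Ahelp
  rw [Finset.sum_comm]
  have hin : ∀ xs : Fin (n + 1) → X,
      (∑ ys : Fin (n+1) → Y,
        if xs (Fin.last n) = x then chainJoint μ P n xs * ∏ i, W (xs i) (ys i) else 0)
      = if xs (Fin.last n) = x then chainJoint μ P n xs else 0 := by
    intro xs
    by_cases h : xs (Fin.last n) = x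
    · simp only [h, if_true]
      rw [← Finset.mul_sum, sum_prod_W W hW1, mul_one]
    · simp [h]
  rw [Finset.sum_congr rfl fun xs _ => hin xs]
  exact chain_last_marg μ P hinv n x

lemma Ahelp_fiber (hinv : ∀ x', ∑ x, μ x * P x x' = μ x')
    (hW1 : ∀ x, ∑ y, W x y = 1) (n : ℕ) (b : Y) (x : X) :
    ∑ ys : Fin (n + 1) → Y, (if ys (Fin.last n) = b then Ahelp μ P W n ys x else 0)
      = μ x * W x b := by
  unfold Ahelp
  have hpush : ∀ ys : Fin (n + 1) → Y,
      (if ys (Fin.last n) = b then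
        (∑ xs : Fin (n+1) → X,
          if xs (Fin.last n) = x then chainJoint μ P n xs * ∏ i, W (xs i) (ys i) else 0)
        else 0)
      = ∑ xs : Fin (n+1) → X, (if xs (Fin.last n) = x then
          chainJoint μ P n xs * (if ys (Fin.last n) = b then ∏ i, W (xs i) (ys i) else 0)
          else 0) := by
    intro ys
    by_cases h : ys (Fin.last n) = b
    · simp [h]
    · simp [h]
  rw [Finset.sum_congr rfl fun ys _ => hpush ys, Finset.sum_comm]
  have hin : ∀ xs : Fin (n + 1) → X,
      (∑ ys : Fin (n+1) → Y, if xs (Fin.last n) = x then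
        chainJoint μ P n xs * (if ys (Fin.last n) = b then ∏ i, W (xs i) (ys i) else 0)
        else 0)
      = (if xs (Fin.last n) = x then chainJoint μ P n xs else 0) * W x b := by
    intro xs
    by_cases h : xs (Fin.last n) = x
    · simp only [h, if_true]
      rw [← Finset.mul_sum, W_fiber W hW1 n xs b, h]
    · simp [h]
  rw [Finset.sum_congr rfl fun xs _ => hin xs, ← Finset.sum_mul,
    chain_last_marg μ P hinv n x]

end Obs

end Helpers


section Main
variable {X Y : Type} [Fintype X] [Fintype Y] [DecidableEq X] [DecidableEq Y]
variable (μ : X → ℝ) (P : X → X → ℝ) (W : X → Y → ℝ)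

lemma obs_nonneg (hμ0 : ∀ x, 0 ≤ μ x) (hP0 : ∀ x x', 0 ≤ P x x')
    (hW0 : ∀ x y, 0 ≤ W x y) (n : ℕ) (ys : Fin (n + 1) → Y) :
    0 ≤ obsJoint μ P W n ys :=
  Finset.sum_nonneg fun xs _ =>
    mul_nonneg (mul_nonneg (hμ0 _) (Finset.prod_nonneg fun i _ => hP0 _ _))
      (Finset.prod_nonneg fun i _ => hW0 _ _)

lemma jointYY_margin (hP1 : ∀ x, ∑ x', P x x' = 1) (hW1 : ∀ x, ∑ y, W x y = 1) (b : Y) :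
    ∑ c, jointYY μ P W (b, c) = nuDist μ W b := by
  unfold jointYY nuDist
  rw [Finset.sum_comm]
  refine Finset.sum_congr rfl fun x _ => ?_
  rw [Finset.sum_comm]
  have h1 : ∀ x', ∑ c, μ x * W x b * P x x' * W x' c = μ x * W x b * P x x' := by
    intro x'
    rw [← Finset.mul_sum, hW1, mul_one]
  rw [Finset.sum_congr rfl fun x' _ => h1 x', ← Finset.mul_sum, hP1, mul_one]

/-- Upper bound: `H(Y^{n+2}) - H(Y^{n+1}) ≤ H(Y_2|Y_1)`. -/
lemma step_upper (hμ0 : ∀ x, 0 ≤ μ x) (hμ1 : ∑ x, μ x = 1)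
    (hP0 : ∀ x x', 0 ≤ P x x') (hP1 : ∀ x, ∑ x', P x x' = 1)
    (hinv : ∀ x', ∑ x, μ x * P x x' = μ x')
    (hW0 : ∀ x y, 0 ≤ W x y) (hW1 : ∀ x, ∑ y, W x y = 1) (n : ℕ) :
    ent (obsJoint μ P W (n + 1)) - ent (obsJoint μ P W n)
      ≤ ent (jointYY μ P W) - ent (nuDist μ W) := by
  set pu : ((Fin (n + 1) → Y) × Y) → ℝ :=
    fun z => obsJoint μ P W (n + 1) (Fin.snoc z.1 z.2) with hpu
  have hpu0 : ∀ z, 0 ≤ pu z := fun z => obs_nonneg μ P W hμ0 hP0 hW0 (n + 1) _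
  have hpu1 : ∑ z, pu z = 1 := by
    rw [← sum_snoc (n + 1) (obsJoint μ P W (n + 1))]
    exact sum_obs μ P W hμ1 hinv hW1 (n + 1)
  have hentpu : ent pu = ent (obsJoint μ P W (n + 1)) := by
    unfold ent
    rw [sum_snoc (n + 1)
      (fun v => obsJoint μ P W (n + 1) v * Real.logb 2 (obsJoint μ P W (n + 1) v))]
  have hmargD : (fun d => ∑ c, pu (d, c)) = obsJoint μ P W n := by
    funext d
    have : ∀ c, pu (d, c) = ∑ x, Ahelp μ P W n d x * gstep P W x c := fun c =>
      obs_snoc_eq μ P W n d c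
    rw [Finset.sum_congr rfl fun c _ => this c, Finset.sum_comm]
    have h2 : ∀ x, ∑ c, Ahelp μ P W n d x * gstep P W x c = Ahelp μ P W n d x := by
      intro x
      rw [← Finset.mul_sum, gstep_sum P W hP1 hW1, mul_one]
    rw [Finset.sum_congr rfl fun x _ => h2 x]
    exact Ahelp_sum_x μ P W n d
  have hmargBC : ∀ b c, (∑ d : Fin (n + 1) → Y,
      if d (Fin.last n) = b then pu (d, c) else 0) = jointYY μ P W (b, c) := by
    intro b c
    have hsplit : ∀ d : Fin (n + 1) → Y,
        (if d (Fin.last n) = b then pu (d, c) else 0)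
          = ∑ x, (if d (Fin.last n) = b then Ahelp μ P W n d x else 0) * gstep P W x c := by
      intro d
      by_cases h : d (Fin.last n) = b
      · simp only [h, if_true]
        rw [hpu]
        exact obs_snoc_eq μ P W n d c
      · simp [h]
    rw [Finset.sum_congr rfl fun d _ => hsplit d, Finset.sum_comm]
    have h3 : ∀ x, (∑ d : Fin (n + 1) → Y,
        (if d (Fin.last n) = b then Ahelp μ P W n d x else 0) * gstep P W x c)
        = (μ x * W x b) * gstep P W x c := by
      intro x
      rw [← Finset.sum_mul, Ahelp_fiber μ P W hinv hW1 n b x]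
    rw [Finset.sum_congr rfl fun x _ => h3 x]
    unfold jointYY gstep
    refine Finset.sum_congr rfl fun x _ => ?_
    rw [Finset.mul_sum]
    refine Finset.sum_congr rfl fun x' _ => by ring
  have hsub := sub_entropy (fun ys : Fin (n + 1) → Y => ys (Fin.last n)) pu hpu0 hpu1
  rw [hentpu, hmargD] at hsub
  have hBCfun : (fun bc : Y × Y => ∑ d : Fin (n + 1) → Y,
      if d (Fin.last n) = bc.1 then pu (d, bc.2) else 0) = jointYY μ P W := by
    funext bc
    exact hmargBC bc.1 bc.2
  rw [hBCfun] at hsub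
  have hBfun : (fun b => ∑ d : Fin (n + 1) → Y, ∑ c,
      if d (Fin.last n) = b then pu (d, c) else 0) = nuDist μ W := by
    funext b
    rw [Finset.sum_comm]
    rw [Finset.sum_congr rfl fun c _ => hmargBC b c]
    exact jointYY_margin μ P W hP1 hW1 b
  rw [hBfun] at hsub
  linarith

/-- Lower bound: `H(Y^{n+2}) - H(Y^{n+1}) ≥ H(Y_2|X_1)`. -/
lemma step_lower (hμ0 : ∀ x, 0 ≤ μ x) (hμ1 : ∑ x, μ x = 1)
    (hP0 : ∀ x x', 0 ≤ P x x') (hP1 : ∀ x, ∑ x', P x x' = 1)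
    (hinv : ∀ x', ∑ x, μ x * P x x' = μ x')
    (hW0 : ∀ x y, 0 ≤ W x y) (hW1 : ∀ x, ∑ y, W x y = 1) (n : ℕ) :
    ent (jointX1Y2 μ P W) - ent μ
      ≤ ent (obsJoint μ P W (n + 1)) - ent (obsJoint μ P W n) := by
  set A : ((Fin (n + 1) → Y) × X) → ℝ := fun d => Ahelp μ P W n d.1 d.2 with hA
  have hA0 : ∀ d, 0 ≤ A d := fun d => Ahelp_nonneg μ P W hμ0 hP0 hW0 n d.1 d.2
  have hg0 : ∀ x c, 0 ≤ gstep P W x c := fun x c =>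
    Finset.sum_nonneg fun x' _ => mul_nonneg (hP0 _ _) (hW0 _ _)
  have hg1 : ∀ x, ∑ c, gstep P W x c = 1 := gstep_sum P W hP1 hW1
  set plo : (((Fin (n + 1) → Y) × X) × Y) → ℝ :=
    fun z => A z.1 * gstep P W z.1.2 z.2 with hplo
  have hplo0 : ∀ z, 0 ≤ plo z := fun z => mul_nonneg (hA0 _) (hg0 _ _)
  -- the X-marginal of A is μ
  have hmargX : ∀ x, (∑ d : (Fin (n + 1) → Y) × X, if d.2 = x then A d else 0) = μ x := by
    intro x
    rw [Fintype.sum_prod_type]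
    have h1 : ∀ ys : Fin (n + 1) → Y,
        (∑ x2, if x2 = x then A (ys, x2) else 0) = Ahelp μ P W n ys x := by
      intro ys
      rw [Finset.sum_ite_eq' Finset.univ x (fun x2 => A (ys, x2))]
      simp
      rfl
    rw [Finset.sum_congr rfl fun ys _ => h1 ys]
    exact Ahelp_sum_ys μ P W hinv hW1 n x
  have hplo1 : ∑ z, plo z = 1 := by
    rw [Fintype.sum_prod_type]
    have h1 : ∀ d : (Fin (n + 1) → Y) × X, ∑ c, plo (d, c) = A d := by
      intro d
      show (∑ c, A d * gstep P W d.2 c) = A d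
      rw [← Finset.mul_sum, hg1, mul_one]
    rw [Finset.sum_congr rfl fun d _ => h1 d, Fintype.sum_prod_type, Finset.sum_comm]
    have h2 : ∀ x, ∑ ys : Fin (n + 1) → Y, A (ys, x) = μ x := fun x =>
      Ahelp_sum_ys μ P W hinv hW1 n x
    rw [Finset.sum_congr rfl fun x _ => h2 x]
    exact hμ1
  -- conditional independence equality : H(C | Y^{n+1}, X) = H(C | X) = H(Y_2|X_1)
  have heq := eq_cond_entropy (fun d : (Fin (n + 1) → Y) × X => d.2) A (gstep P W)
    hA0 hg0 hg1
  have hABμ : (fun b => ∑ d : (Fin (n + 1) → Y) × X, if d.2 = b then A d else 0) = μ := by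
    funext x
    exact hmargX x
  rw [hABμ] at heq
  have hjX1Y2 : (fun bc : X × Y =>
      (∑ d : (Fin (n + 1) → Y) × X, if d.2 = bc.1 then A d else 0) * gstep P W bc.1 bc.2)
      = jointX1Y2 μ P W := by
    funext bc
    rw [hmargX bc.1]
    unfold jointX1Y2 gstep
    rw [Finset.mul_sum]
    refine Finset.sum_congr rfl fun x' _ => by ring
  rw [hjX1Y2] at heq
  have heq' : ent plo - ent A = ent (jointX1Y2 μ P W) - ent μ := heq
  -- conditioning reduces entropy : H(C | Y^{n+1}, X) ≤ H(C | Y^{n+1})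
  have hsub := sub_entropy (fun d : (Fin (n + 1) → Y) × X => d.1) plo hplo0 hplo1
  have hmargD : (fun d : (Fin (n + 1) → Y) × X => ∑ c, plo (d, c)) = A := by
    funext d
    show (∑ c, A d * gstep P W d.2 c) = A d
    rw [← Finset.mul_sum, hg1, mul_one]
  rw [hmargD] at hsub
  have hBC : ∀ (ys : Fin (n + 1) → Y) (c : Y),
      (∑ d : (Fin (n + 1) → Y) × X, if d.1 = ys then plo (d, c) else 0)
        = obsJoint μ P W (n + 1) (Fin.snoc ys c) := by
    intro ys c
    rw [Fintype.sum_prod_type, Finset.sum_comm]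
    have h1 : ∀ x, (∑ ys' : Fin (n + 1) → Y, if ys' = ys then plo ((ys', x), c) else 0)
        = plo ((ys, x), c) := by
      intro x
      rw [Finset.sum_ite_eq' Finset.univ ys (fun ys' => plo ((ys', x), c))]
      simp
    rw [Finset.sum_congr rfl fun x _ => h1 x, obs_snoc_eq μ P W n ys c]
  have hBCfun : (fun bc : (Fin (n + 1) → Y) × Y =>
      ∑ d : (Fin (n + 1) → Y) × X, if d.1 = bc.1 then plo (d, bc.2) else 0)
      = (fun bc : (Fin (n + 1) → Y) × Y => obsJoint μ P W (n + 1) (Fin.snoc bc.1 bc.2)) := by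
    funext bc
    exact hBC bc.1 bc.2
  rw [hBCfun] at hsub
  have hBfun : (fun ys : Fin (n + 1) → Y => ∑ d : (Fin (n + 1) → Y) × X, ∑ c,
      if d.1 = ys then plo (d, c) else 0) = obsJoint μ P W n := by
    funext ys
    rw [Finset.sum_comm]
    rw [Finset.sum_congr rfl fun c _ => hBC ys c]
    have h2 : ∀ c, obsJoint μ P W (n + 1) (Fin.snoc ys c)
        = ∑ x, Ahelp μ P W n ys x * gstep P W x c := fun c => obs_snoc_eq μ P W n ys c
    rw [Finset.sum_congr rfl fun c _ => h2 c, Finset.sum_comm]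
    have h3 : ∀ x, ∑ c, Ahelp μ P W n ys x * gstep P W x c = Ahelp μ P W n ys x := by
      intro x
      rw [← Finset.mul_sum, hg1, mul_one]
    rw [Finset.sum_congr rfl fun x _ => h3 x]
    exact Ahelp_sum_x μ P W n ys
  rw [hBfun] at hsub
  have hentpu : ent (fun bc : (Fin (n + 1) → Y) × Y =>
      obsJoint μ P W (n + 1) (Fin.snoc bc.1 bc.2)) = ent (obsJoint μ P W (n + 1)) := by
    unfold ent
    rw [sum_snoc (n + 1)
      (fun v => obsJoint μ P W (n + 1) v * Real.logb 2 (obsJoint μ P W (n + 1) v))]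
  rw [hentpu] at hsub
  linarith [heq', hsub]

end Main

/-- For every `β` with `0 ≤ β ≤ 1/2`:
`β·C_P(X,W) ≤ δ_β(X,W) ≤ C_β(X,W)`. -/
theorem delta_between_below_half
    {X Y : Type} [Fintype X] [Fintype Y] [Nonempty X] [Nonempty Y] [DecidableEq X]
    (μ : X → ℝ) (P : X → X → ℝ) (W : X → Y → ℝ)
    (hμ0 : ∀ x, 0 ≤ μ x) (hμ1 : ∑ x, μ x = 1)
    (hP0 : ∀ x x', 0 ≤ P x x') (hP1 : ∀ x, ∑ x', P x x' = 1)
    (hinv : ∀ x', ∑ x, μ x * P x x' = μ x')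
    (hirr : IrreducibleAperiodic (Matrix.of fun a b => P a b))
    (hW0 : ∀ x y, 0 ≤ W x y) (hW1 : ∀ x, ∑ y, W x y = 1)
    (hbarY : ℝ)
    (hlim : Filter.Tendsto (fun n => ent (obsJoint μ P W (n + 1)) - ent (obsJoint μ P W n))
      Filter.atTop (nhds hbarY)) :
    ∀ β : ℝ, 0 ≤ β → β ≤ 1 / 2 →
      β * CP μ P W ≤ deltaBeta μ P W hbarY β ∧
      deltaBeta μ P W hbarY β ≤ Cbeta μ P W β := by
  classical
  have hub : ∀ n, ent (obsJoint μ P W (n + 1)) - ent (obsJoint μ P W n)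
      ≤ HY2gY1 μ P W := by
    intro n
    have := step_upper μ P W hμ0 hμ1 hP0 hP1 hinv hW0 hW1 n
    unfold HY2gY1
    linarith
  have hlb : ∀ n, HY2gX1 μ P W
      ≤ ent (obsJoint μ P W (n + 1)) - ent (obsJoint μ P W n) := by
    intro n
    have := step_lower μ P W hμ0 hμ1 hP0 hP1 hinv hW0 hW1 n
    unfold HY2gX1
    linarith
  have h1 : hbarY ≤ HY2gY1 μ P W :=
    le_of_tendsto hlim (Filter.Eventually.of_forall hub)
  have h2 : HY2gX1 μ P W ≤ hbarY :=
    ge_of_tendsto hlim (Filter.Eventually.of_forall hlb)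
  intro β hβ0 hβ2
  have hcoef : (0:ℝ) ≤ 1 - 2 * β := by linarith
  have e1 : deltaBeta μ P W hbarY β - β * CP μ P W
      = (1 - 2 * β) * (HY2gY1 μ P W - hbarY) := by
    unfold deltaBeta CP IY1Y2 HY2gY1
    ring
  have e2 : Cbeta μ P W β - deltaBeta μ P W hbarY β
      = (1 - 2 * β) * (hbarY - HY2gX1 μ P W) := by
    unfold Cbeta CL deltaBeta CP IY1Y2 HY2gY1
    ring
  constructor
  · nlinarith [mul_nonneg hcoef (by linarith : (0:ℝ) ≤ HY2gY1 μ P W - hbarY)]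
  · nlinarith [mul_nonneg hcoef (by linarith : (0:ℝ) ≤ hbarY - HY2gX1 μ P W)]
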